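/- In the construction with partial knot K̂ and tangle T, the word ℓ = ℓ₋ · ℓ₊ representing the preferred longitude of K, where ℓ₊ = w₁* w₂* ⋯ w_i* S₊ w_{i+1}* ⋯ w_m* and ℓ₋ = w_m ⋯ w_{i+1} S₋ w_i ⋯ w₂ w₁, satisfies φ(ℓ) = 1 for the epimorphism φ: G(K) → G(K̂) of the construction, since φ(w_k w_k*) = 1 for every k and φ(S₊) = φ(S₋) = 1. -/

import Mathlib

/-- The Wirtinger generators of the knot `K` of the construction: the arcs
`x_1, …, x_m` of the diagram `D`, the arcs `x_1*, …, x_m*` of the reflected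
diagram `D*`, and the arcs `s_1, …, s_n` of the tangle `T`. -/
abbrev WirtGen (m n : ℕ) := Fin m ⊕ Fin m ⊕ Fin n

/-- The map on Wirtinger generators: `x_i ↦ x̂_i`, `x_i* ↦ x̂_i`, `s_i ↦ x̂_b`
(for the fixed generator index `b`). -/
def genMap (m n : ℕ) (b : Fin m) : WirtGen m n → Fin m
  | Sum.inl i => i
  | Sum.inr (Sum.inl i) => i
  | Sum.inr (Sum.inr _) => b

/-- The words of the form `s_j s_k⁻¹` or `s_j⁻¹ s_k` in the tangle
generators; the words `S₊` and `S₋` are products of such words. -/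
def tangleWords (m n : ℕ) : Set (FreeGroup (WirtGen m n)) :=
  {u | ∃ j k : Fin n,
    u = FreeGroup.of (Sum.inr (Sum.inr j) : WirtGen m n)
          * (FreeGroup.of (Sum.inr (Sum.inr k) : WirtGen m n))⁻¹ ∨
    u = (FreeGroup.of (Sum.inr (Sum.inr j) : WirtGen m n))⁻¹
          * FreeGroup.of (Sum.inr (Sum.inr k) : WirtGen m n)}

/-- In the construction with partial knot `K̂` and tangle `T`, the word
`ℓ = ℓ₋ · ℓ₊` representing the preferred longitude of `K`, where
`ℓ₊ = w₁* w₂* ⋯ w_{i₀}* S₊ w_{i₀+1}* ⋯ w_m*` and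
`ℓ₋ = w_m ⋯ w_{i₀+1} S₋ w_{i₀} ⋯ w₂ w₁`, each pair `(w_k, w_k*)` being of the
form `(x⁻¹y, (y*)⁻¹x*)` or `(xy⁻¹, y*(x*)⁻¹)` and `S₊`, `S₋` products of words
`s_j s_k⁻¹` or `s_j⁻¹ s_k`, satisfies `φ(ℓ) = 1` for the epimorphism
`φ : G(K) → G(K̂)` of the construction (the homomorphism of presented groups
sending `x_i, x_i* ↦ x̂_i` and `s_i ↦ x̂_b`), since `φ(w_k w_k*) = 1` for every
`k` and `φ(S₊) = φ(S₋) = 1`. -/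
theorem longitude_maps_to_trivial (m n : ℕ) (b : Fin m) (i₀ : ℕ)
    (R : Set (FreeGroup (WirtGen m n))) (Rhat : Set (FreeGroup (Fin m)))
    (w wstar : Fin m → FreeGroup (WirtGen m n))
    (hw : ∀ k : Fin m, ∃ x y : Fin m,
      (w k = (FreeGroup.of (Sum.inl x : WirtGen m n))⁻¹
              * FreeGroup.of (Sum.inl y : WirtGen m n) ∧
       wstar k = (FreeGroup.of (Sum.inr (Sum.inl y) : WirtGen m n))⁻¹
              * FreeGroup.of (Sum.inr (Sum.inl x) : WirtGen m n)) ∨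
      (w k = FreeGroup.of (Sum.inl x : WirtGen m n)
              * (FreeGroup.of (Sum.inl y : WirtGen m n))⁻¹ ∧
       wstar k = FreeGroup.of (Sum.inr (Sum.inl y) : WirtGen m n)
              * (FreeGroup.of (Sum.inr (Sum.inl x) : WirtGen m n))⁻¹))
    (Splus Sminus : FreeGroup (WirtGen m n))
    (hSplus : Splus ∈ Submonoid.closure (tangleWords m n))
    (hSminus : Sminus ∈ Submonoid.closure (tangleWords m n))
    (ℓplus ℓminus ℓ : FreeGroup (WirtGen m n))
    (hℓplus : ℓplus = ((List.ofFn wstar).take i₀).prod * Splus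
        * ((List.ofFn wstar).drop i₀).prod)
    (hℓminus : ℓminus = ((List.ofFn w).drop i₀).reverse.prod * Sminus
        * ((List.ofFn w).take i₀).reverse.prod)
    (hℓ : ℓ = ℓminus * ℓplus)
    -- the epimorphism of the construction
    (φ : PresentedGroup R →* PresentedGroup Rhat)
    (hφ : ∀ g : WirtGen m n,
      φ (PresentedGroup.of g) = PresentedGroup.of (genMap m n b g)) :
    (∀ k : Fin m, φ (PresentedGroup.mk R (w k * wstar k)) = 1) ∧
    φ (PresentedGroup.mk R Splus) = 1 ∧
    φ (PresentedGroup.mk R Sminus) = 1 ∧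
    φ (PresentedGroup.mk R ℓ) = 1 := by

    set ψ : FreeGroup (WirtGen m n) →* PresentedGroup Rhat :=
      φ.comp (PresentedGroup.mk R) with hψdef
    have hψ : ∀ g : WirtGen m n, ψ (FreeGroup.of g) = PresentedGroup.of (genMap m n b g) := by
      intro g; exact hφ g
    have hψw : ∀ k : Fin m, ψ (w k * wstar k) = 1 := by
      intro k
      rcases hw k with ⟨x, y, ⟨h1, h2⟩ | ⟨h1, h2⟩⟩ <;>
        simp [h1, h2, map_mul, map_inv, hψ, genMap, mul_assoc]
    have hψtw : ∀ u ∈ tangleWords m n, ψ u = 1 := by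
      rintro u ⟨j, k, h | h⟩ <;>
        simp [h, map_mul, map_inv, hψ, genMap]
    have hψcl : ∀ u ∈ Submonoid.closure (tangleWords m n), ψ u = 1 := by
      intro u hu
      induction hu using Submonoid.closure_induction with
      | mem v hv => exact hψtw v hv
      | one => exact map_one ψ
      | mul a c _ _ ha hc => rw [map_mul, ha, hc, one_mul]
    have hSp : ψ Splus = 1 := hψcl _ hSplus
    have hSm : ψ Sminus = 1 := hψcl _ hSminus
    have hinv : ∀ k : Fin m, ψ (wstar k) = (ψ (w k))⁻¹ := by
      intro k
      have h := hψw k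
      rw [map_mul] at h
      exact (inv_eq_of_mul_eq_one_right h).symm
    refine ⟨hψw, hSp, hSm, ?_⟩
    have hlist : ∀ L : List (FreeGroup (WirtGen m n)), ψ L.prod = (L.map ψ).prod := by
      intro L; exact (map_list_prod ψ L)
    have key : ψ ℓ = 1 := by
      subst hℓ hℓplus hℓminus
      simp only [map_mul, hSp, hSm, mul_one, one_mul]
      have hmapw : (List.ofFn w).map ψ = List.ofFn (fun k => ψ (w k)) := by
        simp [List.map_ofFn]; rfl
      have hmapws : (List.ofFn wstar).map ψ = List.ofFn (fun k => (ψ (w k))⁻¹) := by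
        rw [List.map_ofFn]
        congr 1
        funext k
        exact hinv k
      set L : List (PresentedGroup Rhat) := List.ofFn (fun k => ψ (w k)) with hL
      have hofn : (List.ofFn fun k => (ψ (w k))⁻¹) = L.map Inv.inv := by
        rw [hL, List.map_ofFn]; rfl
      have e1 : ψ (((List.ofFn wstar).take i₀).prod) = ((L.take i₀).map Inv.inv).prod := by
        rw [hlist, List.map_take, hmapws, hofn, List.map_take]
      have e2 : ψ (((List.ofFn wstar).drop i₀).prod) = ((L.drop i₀).map Inv.inv).prod := by
        rw [hlist, List.map_drop, hmapws, hofn, List.map_drop]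
      have e3 : ψ (((List.ofFn w).drop i₀).reverse.prod) = (L.drop i₀).reverse.prod := by
        rw [hlist, List.map_reverse, List.map_drop, hmapw]
      have e4 : ψ (((List.ofFn w).take i₀).reverse.prod) = (L.take i₀).reverse.prod := by
        rw [hlist, List.map_reverse, List.map_take, hmapw]
      rw [e1, e2, e3, e4]
      have inv_prod : ∀ M : List (PresentedGroup Rhat),
          (M.map Inv.inv).prod = (M.reverse.prod)⁻¹ := by
        intro M
        induction M with
        | nil => simp
        | cons a t ih => simp [ih, mul_comm]
      rw [inv_prod, inv_prod]
      group
    exact key
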